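/- arXiv:2309.06392 — 4 statements merged into one kernel-verified Lean document; each statement's English description precedes it below -/
import Mathlib

section
/- For a connected undirected graph G on n vertices with Laplacian matrix L, the Moore–Penrose pseudoinverse of L satisfies L† = (L + (1/n)J)⁻¹ − (1/n)J, where J is the all-ones n×n matrix. -/
open Matrix Finset
open scoped Classical

/-- The four Penrose identities: `B` is the Moore–Penrose pseudoinverse of `A`. -/
def IsMoorePenrose {m : Type*} [Fintype m] [DecidableEq m]
    (A B : Matrix m m ℝ) : Prop :=
  A * B * A = A ∧ B * A * B = B ∧ (A * B)ᵀ = A * B ∧ (B * A)ᵀ = B * A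

/-- The Moore–Penrose pseudoinverse (chosen when it exists, `0` otherwise). -/
noncomputable def pinv {m : Type*} [Fintype m] [DecidableEq m]
    (A : Matrix m m ℝ) : Matrix m m ℝ :=
  if h : ∃ B, IsMoorePenrose A B then h.choose else 0

/-- Signed incidence vector `b_{xy} = e_x - e_y`. -/
def incVec {n : ℕ} (x y : Fin n) : Fin n → ℝ :=
  fun i => (if i = x then 1 else 0) - (if i = y then 1 else 0)

/-- Effective resistance between `x` and `y` in `G`. -/
noncomputable def effRes {n : ℕ} (G : SimpleGraph (Fin n)) (x y : Fin n) : ℝ :=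
  incVec x y ⬝ᵥ (pinv (G.lapMatrix ℝ)).mulVec (incVec x y)

/-- Resistance distance of `v`: sum of effective resistances to all other vertices. -/
noncomputable def resDist {n : ℕ} (G : SimpleGraph (Fin n)) (v : Fin n) : ℝ :=
  ∑ u ∈ Finset.univ.erase v, effRes G u v

/-- Information centrality of `v`. -/
noncomputable def infoCent {n : ℕ} (G : SimpleGraph (Fin n)) (v : Fin n) : ℝ :=
  (n : ℝ) / resDist G v

/-- For a connected graph `G` on `n` vertices with Laplacian `L`, the matrix
`L + (1/n)J` is invertible and `(L + (1/n)J)⁻¹ - (1/n)J` is the Moore–Penrose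
pseudoinverse of `L`, where `J` is the all-ones matrix. -/
theorem stmt_0 {n : ℕ} (hn : 0 < n) (G : SimpleGraph (Fin n)) (hG : G.Connected) :
    IsUnit (G.lapMatrix ℝ + (1 / (n : ℝ)) • (Matrix.of fun _ _ => (1 : ℝ))) ∧
    IsMoorePenrose (G.lapMatrix ℝ)
      ((G.lapMatrix ℝ + (1 / (n : ℝ)) • (Matrix.of fun _ _ => (1 : ℝ)))⁻¹ -
        (1 / (n : ℝ)) • (Matrix.of fun _ _ => (1 : ℝ))) := by
  set L : Matrix (Fin n) (Fin n) ℝ := G.lapMatrix ℝ with hLdef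
  set c : ℝ := 1 / (n : ℝ) with hcdef
  set J : Matrix (Fin n) (Fin n) ℝ := Matrix.of fun _ _ => (1 : ℝ) with hJdef
  have hn' : (n : ℝ) ≠ 0 := Nat.cast_ne_zero.mpr hn.ne'
  have hcn : c * (n : ℝ) = 1 := by rw [hcdef, one_div, inv_mul_cancel₀ hn']
  have hJT : Jᵀ = J := by ext i j; rfl
  have hLT : Lᵀ = L := G.isSymm_lapMatrix (R := ℝ)
  have hLJ : L * J = 0 := by
    ext i j
    have := congrFun (G.lapMatrix_mulVec_const_eq_zero (R := ℝ)) i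
    simpa [Matrix.mul_apply, Matrix.mulVec, dotProduct, hJdef] using this
  have hJL : J * L = 0 := by
    have : (J * L)ᵀ = 0 := by rw [Matrix.transpose_mul, hLT, hJT, hLJ]
    calc J * L = ((J * L)ᵀ)ᵀ := by rw [Matrix.transpose_transpose]
    _ = 0 := by rw [this]; ext i j; rfl
  have hJJ : J * J = (n : ℝ) • J := by
    ext i j
    simp [Matrix.mul_apply, hJdef, Matrix.smul_apply, Finset.card_univ]
  set M : Matrix (Fin n) (Fin n) ℝ := L + c • J with hMdef
  have hMT : Mᵀ = M := by
    rw [hMdef, Matrix.transpose_add, Matrix.transpose_smul, hLT, hJT]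
  -- quadratic form
  have hquad : ∀ x : Fin n → ℝ, x ⬝ᵥ (M *ᵥ x) =
      x ⬝ᵥ (L *ᵥ x) + c * (∑ i, x i) ^ 2 := by
    intro x
    have hJx : J *ᵥ x = fun _ => ∑ i, x i := by
      ext i; simp [Matrix.mulVec, dotProduct, hJdef]
    rw [hMdef, Matrix.add_mulVec, dotProduct_add, Matrix.smul_mulVec,
      dotProduct_smul, hJx]
    congr 1
    simp [dotProduct, Finset.sum_mul, sq, smul_eq_mul, mul_comm]
  have hMposdef : M.PosDef := by
    rw [Matrix.posDef_iff_dotProduct_mulVec]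
    constructor
    · rw [Matrix.IsHermitian, Matrix.conjTranspose_eq_transpose_of_trivial, hMT]
    · intro x hx
      rw [star_trivial, hquad]
      have h1 : 0 ≤ x ⬝ᵥ (L *ᵥ x) := by
        have := (G.posSemidef_lapMatrix ℝ).dotProduct_mulVec_nonneg x
        simpa [star_trivial] using this
      have hc0 : 0 < c := by
        rw [hcdef]; positivity
      have h2 : 0 ≤ c * (∑ i, x i) ^ 2 := by positivity
      by_contra hcon
      push_neg at hcon
      have hL0 : x ⬝ᵥ (L *ᵥ x) = 0 := le_antisymm (by linarith) h1
      have hS0 : c * (∑ i, x i) ^ 2 = 0 := le_antisymm (by linarith) h2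
      have h : (0:ℝ) = x ⬝ᵥ (L *ᵥ x) := hL0.symm
      have hsum : ∑ i, x i = 0 := by
        rcases mul_eq_zero.mp hS0 with hcz | hsq
        · exact absurd hcz (by rw [hcdef]; positivity)
        · exact (pow_eq_zero_iff two_ne_zero).mp hsq
      have hconst : ∀ i j : Fin n, x i = x j := by
        have hzero : Matrix.toLinearMap₂' ℝ (G.lapMatrix ℝ) x x = 0 := by
          rw [Matrix.toLinearMap₂'_apply']
          exact h.symm
        have := (G.lapMatrix_toLinearMap₂'_apply'_eq_zero_iff_forall_reachable x).mp hzero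
        intro i j
        exact this i j (hG.preconnected i j)
      apply hx
      funext i
      have : ∑ j, x j = (n : ℝ) * x i := by
        rw [Finset.sum_congr rfl (fun j _ => hconst j i)]
        simp [Finset.card_univ, mul_comm]
      rw [hsum] at this
      have := this.symm
      rcases mul_eq_zero.mp this with h'' | h''
      · exact absurd h'' hn'
      · exact h''
  have hMunit : IsUnit M := hMposdef.isUnit
  have hMdet : IsUnit M.det := (Matrix.isUnit_iff_isUnit_det M).mp hMunit
  have hMMinv : M * M⁻¹ = 1 := Matrix.mul_nonsing_inv M hMdet
  have hMinvM : M⁻¹ * M = 1 := Matrix.nonsing_inv_mul M hMdet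
  have hMJ : M * J = J := by
    rw [hMdef, Matrix.add_mul, hLJ, Matrix.smul_mul, hJJ, zero_add, smul_smul, hcn, one_smul]
  have hJM : J * M = J := by
    rw [hMdef, Matrix.mul_add, hJL, Matrix.mul_smul, hJJ, zero_add, smul_smul, hcn, one_smul]
  have hMinvJ : M⁻¹ * J = J := by
    calc M⁻¹ * J = M⁻¹ * (M * J) := by rw [hMJ]
    _ = (M⁻¹ * M) * J := by rw [Matrix.mul_assoc]
    _ = J := by rw [hMinvM, Matrix.one_mul]
  have hJMinv : J * M⁻¹ = J := by
    calc J * M⁻¹ = (J * M) * M⁻¹ := by rw [hJM]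
    _ = J * (M * M⁻¹) := by rw [Matrix.mul_assoc]
    _ = J := by rw [hMMinv, Matrix.mul_one]
  set B : Matrix (Fin n) (Fin n) ℝ := M⁻¹ - c • J with hBdef
  have hLM : L = M - c • J := by rw [hMdef, add_sub_cancel_right]
  have hnc : (n : ℝ) * c = 1 := by rw [mul_comm]; exact hcn
  have hcJcJ : (c • J) * (c • J) = c • J := by
    rw [Matrix.smul_mul, Matrix.mul_smul, hJJ, smul_smul, smul_smul]
    congr 1
    rw [mul_assoc, hcn, mul_one]
  have hLB : L * B = 1 - c • J := by
    rw [hLM, hBdef, Matrix.sub_mul, Matrix.mul_sub, Matrix.mul_sub, hMMinv, hcJcJ,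
      Matrix.mul_smul, Matrix.smul_mul, hMJ, hJMinv]
    abel
  have hBL : B * L = 1 - c • J := by
    rw [hLM, hBdef, Matrix.sub_mul, Matrix.mul_sub, Matrix.mul_sub, hMinvM, hcJcJ,
      Matrix.mul_smul, Matrix.smul_mul, hMinvJ, hJM]
    abel
  have hJB : J * B = 0 := by
    rw [hBdef, Matrix.mul_sub, hJMinv, Matrix.mul_smul, hJJ, smul_smul]
    simp [hcn, hnc]
  refine ⟨hMunit, ?_, ?_, ?_, ?_⟩
  · rw [hLB, Matrix.sub_mul, Matrix.one_mul, Matrix.smul_mul, hJL, smul_zero, sub_zero]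
  · rw [hBL, Matrix.sub_mul, Matrix.one_mul, Matrix.smul_mul, hJB, smul_zero, sub_zero]
  · rw [hLB, Matrix.transpose_sub, Matrix.transpose_one, Matrix.transpose_smul, hJT]
  · rw [hBL, Matrix.transpose_sub, Matrix.transpose_one, Matrix.transpose_smul, hJT]
end

section
/- Let L be the Laplacian of a connected graph G and e = (x,y) an edge such that G∖{e} is connected. Then b_eᵀ L† b_e < 1, and the pseudoinverse of the Laplacian of G∖{e} is (L − b_e b_eᵀ)† = L† + (L† b_e b_eᵀ L†)/(1 − b_eᵀ L† b_e). -/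
set_option linter.unusedSectionVars false
set_option maxHeartbeats 1000000

open Matrix Finset
open scoped Classical

/-! ### Auxiliary lemmas -/

lemma mp_unique {m : Type*} [Fintype m] [DecidableEq m]
    {A B C : Matrix m m ℝ} (hB : IsMoorePenrose A B) (hC : IsMoorePenrose A C) : B = C := by
  obtain ⟨hB1, hB2, hB3, hB4⟩ := hB
  obtain ⟨hC1, hC2, hC3, hC4⟩ := hC
  have hAB : A * B = A * C := by
    have e1 : (A * B) * (A * C) = A * C := by
      rw [show (A*B)*(A*C) = (A*B*A)*C by simp only [mul_assoc], hB1]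
    have e2 : (A * B) * (A * C) = A * B := by
      conv_lhs => rw [← hB3, ← hC3, ← transpose_mul,
        show (A*C)*(A*B) = (A*C*A)*B by simp only [mul_assoc], hC1, hB3]
    rw [← e1, e2]
  have hBA : B * A = C * A := by
    have e1 : (C * A) * (B * A) = C * A := by
      rw [show (C*A)*(B*A) = C*(A*B*A) by simp only [mul_assoc], hB1]
    have e2 : (C * A) * (B * A) = B * A := by
      conv_lhs => rw [← hC4, ← hB4, ← transpose_mul,
        show (B*A)*(C*A) = B*(A*C*A) by simp only [mul_assoc], hC1, hB4]
    rw [← e1, e2]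
  calc B = B * A * B := hB2.symm
    _ = C * A * B := by rw [hBA]
    _ = C * (A * B) := by rw [mul_assoc]
    _ = C * (A * C) := by rw [hAB]
    _ = C * A * C := by rw [mul_assoc]
    _ = C := hC2

lemma pinv_eq {m : Type*} [Fintype m] [DecidableEq m]
    {A B : Matrix m m ℝ} (h : IsMoorePenrose A B) : pinv A = B := by
  have hex : ∃ C, IsMoorePenrose A C := ⟨B, h⟩
  rw [pinv, dif_pos hex]
  exact mp_unique hex.choose_spec h

section helpers
variable {m : Type*} [Fintype m] [DecidableEq m]

lemma mul_vecMulVec (A : Matrix m m ℝ) (u v : m → ℝ) :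
    A * vecMulVec u v = vecMulVec (A *ᵥ u) v := by
  ext i j
  simp only [mul_apply, vecMulVec_apply, mulVec, dotProduct, sum_mul]
  exact Finset.sum_congr rfl fun k _ => by ring

lemma vecMulVec_mul (A : Matrix m m ℝ) (u v : m → ℝ) :
    vecMulVec u v * A = vecMulVec u (v ᵥ* A) := by
  ext i j
  simp only [mul_apply, vecMulVec_apply, vecMul, dotProduct, mul_sum]
  exact Finset.sum_congr rfl fun k _ => by ring

lemma vecMulVec_mulVec (u v w : m → ℝ) :
    vecMulVec u v *ᵥ w = (v ⬝ᵥ w) • u := by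
  ext i
  simp only [mulVec, dotProduct, vecMulVec_apply, Pi.smul_apply, smul_eq_mul]
  rw [Finset.sum_mul]
  exact Finset.sum_congr rfl fun k _ => by ring

lemma smul_vecMulVec (t : ℝ) (u v : m → ℝ) :
    vecMulVec (t • u) v = t • vecMulVec u v := by
  ext i j
  simp [vecMulVec_apply, mul_assoc]

lemma zero_vecMulVec' (u : m → ℝ) : vecMulVec (0 : m → ℝ) u = 0 := by
  ext i j; simp [vecMulVec_apply]

lemma vecMulVec_zero' (u : m → ℝ) : vecMulVec u (0 : m → ℝ) = 0 := by
  ext i j; simp [vecMulVec_apply]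

lemma dp_assoc (A C : Matrix m m ℝ) (x y : m → ℝ) :
    x ⬝ᵥ ((Aᵀ * C) *ᵥ y) = (A *ᵥ x) ⬝ᵥ (C *ᵥ y) := by
  rw [← mulVec_mulVec, dotProduct_mulVec, vecMul_transpose]

end helpers

/-- The all-ones matrix. -/
def allOnes (n : ℕ) : Matrix (Fin n) (Fin n) ℝ := Matrix.of fun _ _ => 1

lemma allOnes_mul_allOnes (n : ℕ) : allOnes n * allOnes n = (n : ℝ) • allOnes n := by
  ext i j; simp [allOnes, mul_apply]

lemma allOnes_mulVec {n : ℕ} (v : Fin n → ℝ) :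
    allOnes n *ᵥ v = fun _ => ∑ k, v k := by
  ext i; simp [allOnes, mulVec, dotProduct]

lemma vecMul_allOnes {n : ℕ} (v : Fin n → ℝ) :
    v ᵥ* allOnes n = fun _ => ∑ k, v k := by
  ext i; simp [allOnes, vecMul, dotProduct]

lemma incVec_sum {n : ℕ} {x y : Fin n} (h : x ≠ y) : ∑ i, incVec x y i = 0 := by
  simp [incVec, Finset.sum_sub_distrib]

lemma lap_mul_allOnes {n : ℕ} (G : SimpleGraph (Fin n)) :
    G.lapMatrix ℝ * allOnes n = 0 := by
  ext i j
  have h0 := congrFun (G.lapMatrix_mulVec_const_eq_zero (R := ℝ)) i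
  simpa [mul_apply, allOnes, mulVec, dotProduct] using h0

lemma allOnes_mul_lap {n : ℕ} (G : SimpleGraph (Fin n)) :
    allOnes n * G.lapMatrix ℝ = 0 := by
  have := congrArg Matrix.transpose (lap_mul_allOnes G)
  rwa [transpose_mul, (G.isSymm_lapMatrix (R := ℝ) : (G.lapMatrix ℝ)ᵀ = _), transpose_zero,
    show (allOnes n)ᵀ = allOnes n from rfl] at this

/-- Existence and basic properties of the Moore–Penrose pseudoinverse of the
Laplacian of a connected graph. -/
lemma lap_pinv_spec {n : ℕ} (hn : 0 < n) (G : SimpleGraph (Fin n)) (hG : G.Connected) :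
    IsMoorePenrose (G.lapMatrix ℝ) (pinv (G.lapMatrix ℝ)) ∧
    (pinv (G.lapMatrix ℝ))ᵀ = pinv (G.lapMatrix ℝ) ∧
    G.lapMatrix ℝ * pinv (G.lapMatrix ℝ) = 1 - (n:ℝ)⁻¹ • allOnes n ∧
    pinv (G.lapMatrix ℝ) * G.lapMatrix ℝ = 1 - (n:ℝ)⁻¹ • allOnes n ∧
    allOnes n * pinv (G.lapMatrix ℝ) = 0 ∧
    pinv (G.lapMatrix ℝ) * allOnes n = 0 := by
  set L := G.lapMatrix ℝ with hLdef
  set J := allOnes n with hJdef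
  set c : ℝ := (n:ℝ)⁻¹ with hcdef
  have hnR : (n:ℝ) ≠ 0 := Nat.cast_ne_zero.mpr hn.ne'
  have hLsymm : Lᵀ = L := G.isSymm_lapMatrix (R := ℝ)
  have hLJ : L * J = 0 := lap_mul_allOnes G
  have hJL : J * L = 0 := allOnes_mul_lap G
  have hJJ : J * J = (n:ℝ) • J := allOnes_mul_allOnes n
  set K := L + c • J with hKdef
  have hKsymm : Kᵀ = K := by
    rw [hKdef, transpose_add, hLsymm, transpose_smul]
    rfl
  have hKpos : K.PosDef := by
    refine posDef_iff_dotProduct_mulVec.mpr ⟨?_, ?_⟩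
    · show Kᴴ = K
      rw [conjTranspose_eq_transpose_of_trivial]
      exact hKsymm
    · intro v hv
      rw [star_trivial]
      have hL0 : 0 ≤ v ⬝ᵥ L *ᵥ v := by
        simpa [star_trivial] using (G.posSemidef_lapMatrix ℝ).dotProduct_mulVec_nonneg v
      have hJv : v ⬝ᵥ J *ᵥ v = (∑ k, v k)^2 := by
        rw [hJdef, allOnes_mulVec]
        simp [dotProduct, Finset.sum_mul, sq]
      have hquad : v ⬝ᵥ K *ᵥ v = v ⬝ᵥ L *ᵥ v + c * (∑ k, v k)^2 := by
        rw [hKdef, add_mulVec, dotProduct_add, smul_mulVec, dotProduct_smul,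
          smul_eq_mul, hJv]
      rw [hquad]
      rcases lt_or_eq_of_le hL0 with h | h
      · have : 0 ≤ c * (∑ k, v k)^2 := by positivity
        linarith
      · have hker : L *ᵥ v = 0 :=
          ((G.posSemidef_lapMatrix ℝ).dotProduct_mulVec_zero_iff v).mp (by
            rw [star_trivial]; exact h.symm)
        have hconst : ∀ i j, v i = v j := by
          intro i j
          have := (G.lapMatrix_mulVec_eq_zero_iff_forall_reachable (x := v)).mp
            hker
          exact this i j (hG.preconnected i j)
        have hsum : ∑ k, v k = (n:ℝ) * v ⟨0, hn⟩ := by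
          rw [Finset.sum_congr rfl fun k _ => hconst k ⟨0, hn⟩]
          simp [mul_comm]
        have hv0 : v ⟨0, hn⟩ ≠ 0 := by
          intro h0
          apply hv
          funext i
          rw [hconst i ⟨0, hn⟩, h0]; rfl
        have : c * (∑ k, v k)^2 > 0 := by
          rw [hsum]
          have : ((n:ℝ) * v ⟨0, hn⟩)^2 > 0 := by positivity
          positivity
        linarith
  have hKdet : IsUnit K.det := hKpos.det_pos.ne'.isUnit
  have hKK : K⁻¹ * K = 1 := nonsing_inv_mul K hKdet
  have hKK' : K * K⁻¹ = 1 := mul_nonsing_inv K hKdet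
  have hcn : c * (n:ℝ) = 1 := inv_mul_cancel₀ hnR
  have hKJ : K * J = J := by
    rw [hKdef, add_mul, hLJ, zero_add, smul_mul_assoc, hJJ, smul_smul, hcn, one_smul]
  have hJK : J * K = J := by
    rw [hKdef, mul_add, hJL, zero_add, mul_smul_comm, hJJ, smul_smul, hcn, one_smul]
  have hKiJ : K⁻¹ * J = J := by
    conv_lhs => rw [← hKJ, ← mul_assoc, hKK, one_mul]
  have hJKi : J * K⁻¹ = J := by
    conv_lhs => rw [← hJK, mul_assoc, hKK', mul_one]
  set B := K⁻¹ - c • J with hBdef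
  have hLK : L = K - c • J := by rw [hKdef]; abel
  have hccn : c * c * (n:ℝ) = c := by rw [mul_assoc, hcn, mul_one]
  have hKcJ : K * (c • J) = c • J := by rw [mul_smul_comm, hKJ]
  have hcJK : (c • J) * K = c • J := by rw [smul_mul_assoc, hJK]
  have hKicJ : K⁻¹ * (c • J) = c • J := by rw [mul_smul_comm, hKiJ]
  have hcJKi : (c • J) * K⁻¹ = c • J := by rw [smul_mul_assoc, hJKi]
  have hcJcJ : (c • J) * (c • J) = c • J := by
    rw [smul_mul_assoc, mul_smul_comm, hJJ, smul_smul, smul_smul, hccn]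
  have hLB : L * B = 1 - c • J := by
    rw [hLK, hBdef, sub_mul, mul_sub, mul_sub, hKK', hKcJ, hcJKi, hcJcJ]
    abel
  have hBL : B * L = 1 - c • J := by
    rw [hLK, hBdef, sub_mul, mul_sub, mul_sub, hKK, hKicJ, hcJK, hcJcJ]
    abel
  have hJB : J * B = 0 := by
    rw [hBdef, mul_sub, hJKi, mul_smul_comm, hJJ, smul_smul, hcn, one_smul, sub_self]
  have hBJ : B * J = 0 := by
    rw [hBdef, sub_mul, hKiJ, smul_mul_assoc, hJJ, smul_smul, hcn, one_smul, sub_self]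
  have hBsymm : Bᵀ = B := by
    rw [hBdef, transpose_sub, transpose_smul, transpose_nonsing_inv, hKsymm]
    rfl
  have hPt : (1 - c • J)ᵀ = 1 - c • J := by
    rw [transpose_sub, transpose_smul, transpose_one]
    rfl
  have hmp : IsMoorePenrose L B := by
    refine ⟨?_, ?_, ?_, ?_⟩
    · rw [hLB, sub_mul, one_mul, smul_mul_assoc, hJL, smul_zero, sub_zero]
    · rw [hBL, sub_mul, one_mul, smul_mul_assoc, hJB, smul_zero, sub_zero]
    · rw [hLB, hPt]
    · rw [hBL, hPt]
  have hp : pinv L = B := pinv_eq hmp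
  rw [hp]
  exact ⟨hmp, hBsymm, hLB, hBL, hJB, hBJ⟩
lemma lap_delete {n : ℕ} (G : SimpleGraph (Fin n)) {x y : Fin n} (hxy : G.Adj x y) :
    (G.deleteEdges {s(x, y)}).lapMatrix ℝ =
      G.lapMatrix ℝ - Matrix.vecMulVec (incVec x y) (incVec x y) := by
  have hne : x ≠ y := hxy.ne
  have hdeg : ∀ i, (((G.deleteEdges {s(x, y)}).degree i : ℝ)) =
      (G.degree i : ℝ) - (incVec x y i) * (incVec x y i) := by
    intro i
    rw [SimpleGraph.degree_eq_sum_if_adj, SimpleGraph.degree_eq_sum_if_adj]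
    have step : ∀ j, (if (G.deleteEdges {s(x, y)}).Adj i j then (1:ℝ) else 0) =
        (if G.Adj i j then (1:ℝ) else 0) -
        (if (G.Adj i j ∧ s(i, j) = s(x, y)) then (1:ℝ) else 0) := by
      intro j
      by_cases h1 : G.Adj i j <;> by_cases h2 : s(i, j) = s(x, y) <;>
        simp [SimpleGraph.deleteEdges_adj, h1, h2]
    rw [Finset.sum_congr rfl fun j _ => step j, Finset.sum_sub_distrib]
    congr 1
    by_cases hix : i = x
    · subst hix
      have : ∀ j, (if (G.Adj i j ∧ s(i, j) = s(i, y)) then (1:ℝ) else 0) =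
          if j = y then (if G.Adj i j then (1:ℝ) else 0) else 0 := by
        intro j
        by_cases hj : j = y <;> simp [hj, Sym2.congr_right, hne]
      rw [Finset.sum_congr rfl fun j _ => this j, Finset.sum_ite_eq' univ y]
      simp [hxy, incVec, hne]
    · by_cases hiy : i = y
      · subst hiy
        have : ∀ j, (if (G.Adj i j ∧ s(i, j) = s(x, i)) then (1:ℝ) else 0) =
            if j = x then (if G.Adj i j then (1:ℝ) else 0) else 0 := by
          intro j
          by_cases hj : j = x
          · simp [hj, Sym2.eq_iff]
          · have : s(i, j) ≠ s(x, i) := by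
              intro hEq
              rcases Sym2.eq_iff.mp hEq with ⟨h1, _⟩ | ⟨_, h2⟩
              · exact hne h1.symm
              · exact hj h2
            simp [hj, this]
        rw [Finset.sum_congr rfl fun j _ => this j, Finset.sum_ite_eq' univ x]
        simp [hxy.symm, incVec, hne, Ne.symm hne]
      · have : ∀ j, (if (G.Adj i j ∧ s(i, j) = s(x, y)) then (1:ℝ) else 0) = 0 := by
          intro j
          have : s(i, j) ≠ s(x, y) := by
            intro hEq
            rcases Sym2.eq_iff.mp hEq with ⟨h1, _⟩ | ⟨h1, _⟩
            · exact hix h1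
            · exact hiy h1
          simp [this]
        rw [Finset.sum_congr rfl fun j _ => this j]
        simp [incVec, hix, hiy]
  ext i j
  simp only [SimpleGraph.lapMatrix, SimpleGraph.degMatrix, Matrix.sub_apply,
    Matrix.vecMulVec_apply, Matrix.diagonal_apply, SimpleGraph.adjMatrix_apply]
  by_cases hij : i = j
  · subst hij
    simp only [if_pos rfl]
    rw [hdeg i]
    have hA : (G.deleteEdges {s(x, y)}).Adj i i = False := by simp
    simp only [SimpleGraph.deleteEdges_adj]
    have : ¬ G.Adj i i := G.irrefl
    simp [this]
  · simp only [if_neg hij]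
    simp only [SimpleGraph.deleteEdges_adj, Set.mem_singleton_iff]
    by_cases hixy : i = x ∧ j = y
    · obtain ⟨hi, hj⟩ := hixy
      subst hi; subst hj
      simp [hxy, incVec, hne, Ne.symm hne, Sym2.eq_iff]
    · by_cases hiyx : i = y ∧ j = x
      · obtain ⟨hi, hj⟩ := hiyx
        subst hi; subst hj
        simp [hxy.symm, incVec, hne, Ne.symm hne, Sym2.eq_iff]
      · have hs : s(i, j) ≠ s(x, y) :=
          fun hEq => (Sym2.eq_iff.mp hEq).elim hixy hiyx
        have hb : incVec x y i * incVec x y j = 0 := by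
          by_cases hx : i = x
          · subst hx
            have h1 : j ≠ y := fun h => hixy ⟨rfl, h⟩
            have h2 : j ≠ i := fun h => hij h.symm
            simp [incVec, h1, h2]
          · by_cases hy : i = y
            · subst hy
              have h1 : j ≠ x := fun h => hiyx ⟨rfl, h⟩
              have h2 : j ≠ i := fun h => hij h.symm
              simp [incVec, h1, h2]
            · simp [incVec, hx, hy]
        rw [hb]
        simp [hs]

/-- Sherman–Morrison update for the Laplacian pseudoinverse. -/
theorem stmt_3 {n : ℕ} (G : SimpleGraph (Fin n)) (hG : G.Connected) (x y : Fin n)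
    (hxy : G.Adj x y) (hconn : (G.deleteEdges {s(x, y)}).Connected) :
    incVec x y ⬝ᵥ (pinv (G.lapMatrix ℝ)).mulVec (incVec x y) < 1 ∧
    pinv (G.lapMatrix ℝ - Matrix.vecMulVec (incVec x y) (incVec x y)) =
      pinv (G.lapMatrix ℝ) +
        (1 - incVec x y ⬝ᵥ (pinv (G.lapMatrix ℝ)).mulVec (incVec x y))⁻¹ •
          (pinv (G.lapMatrix ℝ) * Matrix.vecMulVec (incVec x y) (incVec x y) *
            pinv (G.lapMatrix ℝ)) := by
  have hn : 0 < n := x.pos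
  have hne : x ≠ y := hxy.ne
  set b := incVec x y with hbdef
  set L := G.lapMatrix ℝ with hLdef
  set B := pinv L with hBdef
  set E := Matrix.vecMulVec b b with hEdef
  set J := allOnes n with hJdef
  set t := b ⬝ᵥ B *ᵥ b with htdef
  obtain ⟨⟨hMP1, hMP2, _, _⟩, hBsymm, hLB, hBL, hJB, hBJ⟩ := lap_pinv_spec hn G hG
  rw [← hLdef] at hMP1 hMP2 hBsymm hLB hBL hJB hBJ
  rw [← hBdef] at hMP1 hMP2 hBsymm hLB hBL hJB hBJ
  rw [← hJdef] at hLB hBL hJB hBJ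
  have hsum : ∑ i, b i = 0 := incVec_sum hne
  have hLJ : L * J = 0 := lap_mul_allOnes G
  have hJL : J * L = 0 := allOnes_mul_lap G
  have hJE : J * E = 0 := by
    rw [hEdef, _root_.mul_vecMulVec, hJdef, allOnes_mulVec]
    rw [show (fun _ : Fin n => ∑ k, b k) = (0 : Fin n → ℝ) from funext fun _ => hsum]
    exact zero_vecMulVec' b
  have hEJ : E * J = 0 := by
    rw [hEdef, _root_.vecMulVec_mul, hJdef, vecMul_allOnes]
    rw [show (fun _ : Fin n => ∑ k, b k) = (0 : Fin n → ℝ) from funext fun _ => hsum]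
    exact vecMulVec_zero' b
  -- abbreviation for the projection
  have hPE : (1 - (n:ℝ)⁻¹ • J) * E = E := by
    rw [sub_mul, one_mul, smul_mul_assoc, hJE, smul_zero, sub_zero]
  have hEP : E * (1 - (n:ℝ)⁻¹ • J) = E := by
    rw [mul_sub, mul_one, mul_smul_comm, hEJ, smul_zero, sub_zero]
  have hPL : (1 - (n:ℝ)⁻¹ • J) * L = L := by
    rw [sub_mul, one_mul, smul_mul_assoc, hJL, smul_zero, sub_zero]
  have hPB : (1 - (n:ℝ)⁻¹ • J) * B = B := by
    rw [sub_mul, one_mul, smul_mul_assoc, hJB, smul_zero, sub_zero]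
  have hBP : B * (1 - (n:ℝ)⁻¹ • J) = B := by
    rw [mul_sub, mul_one, mul_smul_comm, hBJ, smul_zero, sub_zero]
  -- the inequality
  have huLu : (B *ᵥ b) ⬝ᵥ (L *ᵥ (B *ᵥ b)) = t := by
    rw [mulVec_mulVec, ← dp_assoc, hBsymm,
      show B * (L * B) = B * L * B from (mul_assoc _ _ _).symm, hMP2, htdef]
  have ht0 : 0 ≤ t := by
    rw [← huLu]
    simpa [star_trivial] using (G.posSemidef_lapMatrix ℝ).dotProduct_mulVec_nonneg (B *ᵥ b)
  have hdel : (G.deleteEdges {s(x, y)}).lapMatrix ℝ = L - E := lap_delete G hxy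
  have hL'psd : (L - E).PosSemidef := by
    have := (G.deleteEdges {s(x, y)}).posSemidef_lapMatrix ℝ
    rwa [hdel] at this
  have hbu : b ⬝ᵥ (B *ᵥ b) = t := htdef.symm
  have hEu : E *ᵥ (B *ᵥ b) = t • b := by
    rw [hEdef, _root_.vecMulVec_mulVec, hbu]
  have hq : (B *ᵥ b) ⬝ᵥ ((L - E) *ᵥ (B *ᵥ b)) = t - t^2 := by
    rw [sub_mulVec, dotProduct_sub, huLu, hEu, dotProduct_smul, smul_eq_mul,
      dotProduct_comm, hbu, sq]
  have htle : t ≤ 1 := by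
    have h0 : 0 ≤ t - t^2 := by
      rw [← hq]
      simpa [star_trivial] using hL'psd.dotProduct_mulVec_nonneg (B *ᵥ b)
    nlinarith
  have htlt : t < 1 := by
    rcases lt_or_eq_of_le htle with h | h
    · exact h
    · exfalso
      have hq0 : (B *ᵥ b) ⬝ᵥ ((L - E) *ᵥ (B *ᵥ b)) = 0 := by
        rw [hq, h]; norm_num
      have hker : (L - E) *ᵥ (B *ᵥ b) = 0 :=
        (hL'psd.dotProduct_mulVec_zero_iff (B *ᵥ b)).mp (by rw [star_trivial]; exact hq0)
      have hker' : (G.deleteEdges {s(x, y)}).lapMatrix ℝ *ᵥ (B *ᵥ b) = 0 := by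
        rw [hdel]; exact hker
      have hconst : ∀ i j, (B *ᵥ b) i = (B *ᵥ b) j := by
        intro i j
        have := ((G.deleteEdges {s(x, y)}).lapMatrix_mulVec_eq_zero_iff_forall_reachable
          (x := B *ᵥ b)).mp hker'
        exact this i j (hconn.preconnected i j)
      have : t = 0 := by
        rw [← hbu]
        calc b ⬝ᵥ (B *ᵥ b) = ∑ i, b i * (B *ᵥ b) i := rfl
          _ = ∑ i, b i * (B *ᵥ b) x := Finset.sum_congr rfl fun i _ => by rw [hconst i x]
          _ = (∑ i, b i) * (B *ᵥ b) x := by rw [Finset.sum_mul]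
          _ = 0 := by rw [hsum, zero_mul]
      rw [this] at h
      exact one_ne_zero h.symm
  refine ⟨htlt, ?_⟩
  -- the Sherman–Morrison formula
  have hc : (1:ℝ) - t ≠ 0 := by
    intro h; rw [sub_eq_zero] at h; exact absurd h.symm htlt.ne
  set N := B * E * B with hNdef
  set M := B + (1 - t)⁻¹ • N with hMdef
  have hEBE : E * B * E = t • E := by
    rw [show E * B * E = (E * B) * E from rfl, hEdef,
      show Matrix.vecMulVec b b * B * Matrix.vecMulVec b b
        = vecMulVec ((Matrix.vecMulVec b b * B) *ᵥ b) b from _root_.mul_vecMulVec _ _ _,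
      ← mulVec_mulVec, ← hEdef]
    rw [show E *ᵥ (B *ᵥ b) = t • b from hEu, _root_.smul_vecMulVec]
  have k1 : L * N = E * B := by
    rw [hNdef, show L * (B * E * B) = ((L * B) * E) * B by simp only [mul_assoc], hLB, hPE]
  have k2 : E * N = t • (E * B) := by
    rw [hNdef, show E * (B * E * B) = (E * B * E) * B by simp only [mul_assoc], hEBE,
      smul_mul_assoc]
  have k3 : N * L = B * E := by
    rw [hNdef, show (B * E * B) * L = B * (E * (B * L)) by simp only [mul_assoc], hBL,
      show B * (E * (1 - (n:ℝ)⁻¹ • J)) = B * E by rw [hEP]]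
  have k4 : N * E = t • (B * E) := by
    rw [hNdef, show (B * E * B) * E = B * (E * B * E) by simp only [mul_assoc], hEBE,
      mul_smul_comm]
  have hscalar : (1 - t)⁻¹ * t = (1 - t)⁻¹ - 1 := by
    field_simp
    ring
  have h1 : (L - E) * M = 1 - (n:ℝ)⁻¹ • J := by
    rw [hMdef, mul_add, sub_mul, sub_mul, mul_smul_comm, mul_smul_comm, k1, k2, hLB,
      smul_smul, hscalar, sub_smul, one_smul]
    abel
  have h2 : M * (L - E) = 1 - (n:ℝ)⁻¹ • J := by
    rw [hMdef, add_mul, mul_sub, mul_sub, smul_mul_assoc, smul_mul_assoc, k3, k4, hBL,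
      smul_smul, hscalar, sub_smul, one_smul]
    abel
  have hPt : (1 - (n:ℝ)⁻¹ • J)ᵀ = 1 - (n:ℝ)⁻¹ • J := by
    rw [transpose_sub, transpose_smul, transpose_one]
    rfl
  have hPN : (1 - (n:ℝ)⁻¹ • J) * N = N := by
    rw [hNdef, show (1 - (n:ℝ)⁻¹ • J) * (B * E * B)
      = ((1 - (n:ℝ)⁻¹ • J) * B) * E * B by simp only [mul_assoc], hPB]
  have hmp' : IsMoorePenrose (L - E) M := by
    refine ⟨?_, ?_, ?_, ?_⟩
    · rw [h1, mul_sub, hPL, hPE]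
    · rw [show M * (L - E) * M = (M * (L - E)) * M from rfl, h2, hMdef, mul_add,
        mul_smul_comm, hPB, hPN]
    · rw [h1, hPt]
    · rw [h2, hPt]
  exact pinv_eq hmp'
end

section
/- Rayleigh monotonicity for edge removal: if G is connected, e ∈ E is an edge such that G∖{e} is connected, then for every pair of vertices x, y the effective resistance in G∖{e} is at least the effective resistance in G. -/
open Matrix Finset
open scoped Classical

section Aux
open SimpleGraph
variable {m : Type*} [Fintype m] [DecidableEq m]

lemma sandwich_mul (U : Matrix m m ℝ) (hU : star U * U = 1) (v w : m → ℝ) :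
    (U * diagonal v * star U) * (U * diagonal w * star U)
      = U * diagonal (v * w) * star U := by
  have h : U * diagonal v * star U * (U * diagonal w * star U)
      = U * diagonal v * (star U * U) * diagonal w * star U := by
    simp only [mul_assoc]
  rw [h, hU, mul_one, mul_assoc U, diagonal_mul_diagonal]
  rfl

lemma sandwich_transpose (U : Matrix m m ℝ) (v : m → ℝ) :
    (U * diagonal v * star U)ᵀ = U * diagonal v * star U := by
  rw [← conjTranspose_eq_transpose_of_trivial]
  simp [conjTranspose_mul, star_eq_conjTranspose, diagonal_conjTranspose, mul_assoc]

lemma exists_isMoorePenrose {A : Matrix m m ℝ} (hA : A.IsHermitian) :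
    ∃ B, IsMoorePenrose A B := by
  set U : Matrix m m ℝ := (hA.eigenvectorUnitary : Matrix m m ℝ) with hUdef
  set d : m → ℝ := RCLike.ofReal ∘ hA.eigenvalues with hd
  have hspec : A = U * diagonal d * star U := hA.spectral_theorem
  have hU : star U * U = 1 := by
    exact mem_unitaryGroup_iff'.mp hA.eigenvectorUnitary.2
  set d' : m → ℝ := fun i => if d i = 0 then 0 else (d i)⁻¹ with hd'
  have hdd'd : d * d' * d = d := by
    funext i
    simp only [Pi.mul_apply, hd']
    by_cases h : d i = 0 <;> simp [h]
  have hd'dd' : d' * d * d' = d' := by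
    funext i
    simp only [Pi.mul_apply, hd']
    by_cases h : d i = 0 <;> simp [h]
  refine ⟨U * diagonal d' * star U, ?_, ?_, ?_, ?_⟩
  · rw [hspec, sandwich_mul U hU, sandwich_mul U hU, hdd'd]
  · rw [hspec, sandwich_mul U hU, sandwich_mul U hU, hd'dd']
  · rw [hspec, sandwich_mul U hU, sandwich_transpose]
  · rw [hspec, sandwich_mul U hU, sandwich_transpose]

lemma isMoorePenrose_unique {A B C : Matrix m m ℝ}
    (hB : IsMoorePenrose A B) (hC : IsMoorePenrose A C) : B = C := by
  obtain ⟨hB1, hB2, hB3, hB4⟩ := hB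
  obtain ⟨hC1, hC2, hC3, hC4⟩ := hC
  have e1 : (A * C) * (A * B) = A * B := by rw [← mul_assoc, mul_assoc A C A, ← mul_assoc, hC1]
  have e2 : (A * B) * (A * C) = A * C := by rw [← mul_assoc, mul_assoc A B A, ← mul_assoc, hB1]
  have h1 : A * B = A * C := by
    calc A * B = ((A * C) * (A * B))ᵀ := by rw [e1, hB3]
      _ = (A * B)ᵀ * (A * C)ᵀ := by rw [transpose_mul]
      _ = (A * B) * (A * C) := by rw [hB3, hC3]
      _ = A * C := e2
  have f1 : (B * A) * (C * A) = B * A := by rw [mul_assoc, ← mul_assoc A C A, hC1]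
  have f2 : (C * A) * (B * A) = C * A := by rw [mul_assoc, ← mul_assoc A B A, hB1]
  have h2 : B * A = C * A := by
    calc B * A = ((B * A) * (C * A))ᵀ := by rw [f1, hB4]
      _ = (C * A)ᵀ * (B * A)ᵀ := by rw [transpose_mul]
      _ = (C * A) * (B * A) := by rw [hB4, hC4]
      _ = C * A := f2
  calc B = B * A * B := hB2.symm
    _ = C * A * B := by rw [h2]
    _ = C * (A * B) := by rw [mul_assoc]
    _ = C * (A * C) := by rw [h1]
    _ = C * A * C := by rw [mul_assoc]
    _ = C := hC2

lemma pinv_isMoorePenrose {A : Matrix m m ℝ} (h : ∃ B, IsMoorePenrose A B) :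
    IsMoorePenrose A (pinv A) := by
  rw [pinv, dif_pos h]; exact h.choose_spec

lemma transpose_isMoorePenrose {A B : Matrix m m ℝ} (hA : Aᵀ = A)
    (hB : IsMoorePenrose A B) : IsMoorePenrose A Bᵀ := by
  obtain ⟨h1, h2, h3, h4⟩ := hB
  refine ⟨?_, ?_, ?_, ?_⟩
  · calc A * Bᵀ * A = (Aᵀ * Bᵀ * Aᵀ) := by rw [hA]
      _ = (A * B * A)ᵀ := by simp [transpose_mul, mul_assoc]
      _ = Aᵀ := by rw [h1]
      _ = A := hA
  · calc Bᵀ * A * Bᵀ = Bᵀ * Aᵀ * Bᵀ := by rw [hA]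
      _ = (B * A * B)ᵀ := by simp [transpose_mul, mul_assoc]
      _ = Bᵀ := by rw [h2]
  · calc (A * Bᵀ)ᵀ = B * Aᵀ := by rw [transpose_mul, transpose_transpose]
      _ = B * A := by rw [hA]
      _ = (B * A)ᵀ := h4.symm
      _ = Aᵀ * Bᵀ := by rw [transpose_mul]
      _ = A * Bᵀ := by rw [hA]
  · calc (Bᵀ * A)ᵀ = Aᵀ * B := by rw [transpose_mul, transpose_transpose]
      _ = A * B := by rw [hA]
      _ = (A * B)ᵀ := h3.symm
      _ = Bᵀ * Aᵀ := by rw [transpose_mul]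
      _ = Bᵀ * A := by rw [hA]

lemma pinv_transpose_self {A : Matrix m m ℝ} (hA : Aᵀ = A)
    (h : ∃ B, IsMoorePenrose A B) : (pinv A)ᵀ = pinv A :=
  isMoorePenrose_unique (transpose_isMoorePenrose hA (pinv_isMoorePenrose h))
    (pinv_isMoorePenrose h)

open SimpleGraph

lemma quad_le {n : ℕ} (G G' : SimpleGraph (Fin n)) (h : G' ≤ G) (x : Fin n → ℝ) :
    x ⬝ᵥ (G'.lapMatrix ℝ *ᵥ x) ≤ x ⬝ᵥ (G.lapMatrix ℝ *ᵥ x) := by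
  rw [← Matrix.toLinearMap₂'_apply', ← Matrix.toLinearMap₂'_apply',
    lapMatrix_toLinearMap₂', lapMatrix_toLinearMap₂']
  have hterm : ∀ i j : Fin n, (if G'.Adj i j then (x i - x j)^2 else 0)
      ≤ (if G.Adj i j then (x i - x j)^2 else 0) := by
    intro i j
    by_cases hij : G'.Adj i j
    · rw [if_pos hij, if_pos (h hij)]
    · rw [if_neg hij]
      split_ifs <;> positivity
  have hsum := Finset.sum_le_sum (fun i (_ : i ∈ Finset.univ) =>
    Finset.sum_le_sum (fun j (_ : j ∈ Finset.univ) => hterm i j))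
  linarith

lemma lap_pinv_solves {n : ℕ} (G : SimpleGraph (Fin n)) (hG : G.Connected)
    (b : Fin n → ℝ) (hb : ∑ i, b i = 0) :
    G.lapMatrix ℝ *ᵥ (pinv (G.lapMatrix ℝ) *ᵥ b) = b := by
  set L := G.lapMatrix ℝ with hL
  have hsym : Lᵀ = L := G.isSymm_lapMatrix (R := ℝ)
  have hherm : L.IsHermitian := (posSemidef_lapMatrix ℝ G).1
  have hex : ∃ B, IsMoorePenrose L B := exists_isMoorePenrose hherm
  set B := pinv L with hBdef
  obtain ⟨h1, h2, h3, h4⟩ := pinv_isMoorePenrose hex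
  have hBt : Bᵀ = B := pinv_transpose_self hsym hex
  set v : Fin n → ℝ := b - (B * L) *ᵥ b with hv
  have hLv : L *ᵥ v = 0 := by
    rw [hv, Matrix.mulVec_sub, Matrix.mulVec_mulVec, ← Matrix.mul_assoc, h1, sub_self]
  have hconst : ∀ i j, v i = v j := by
    have hz := (G.lapMatrix_mulVec_eq_zero_iff_forall_reachable (x := v)).mp
      (by exact hLv)
    exact fun i j => hz i j (hG.preconnected i j)
  have hsum : ∑ i, v i = 0 := by
    have hQ1 : (B * L) *ᵥ (fun _ => (1:ℝ)) = 0 := by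
      rw [← Matrix.mulVec_mulVec, G.lapMatrix_mulVec_const_eq_zero, Matrix.mulVec_zero]
    have hdp : (fun _ => (1:ℝ)) ⬝ᵥ ((B * L) *ᵥ b) = 0 := by
      rw [Matrix.dotProduct_mulVec]
      have hvm : (fun _ => (1:ℝ)) ᵥ* (B * L) = 0 := by
        rw [← h4, Matrix.vecMul_transpose]
        exact hQ1
      rw [hvm, zero_dotProduct]
    have hsum2 : ∑ i, ((B * L) *ᵥ b) i = 0 := by
      simpa [dotProduct] using hdp
    rw [hv]
    simp [Finset.sum_sub_distrib, hb, hsum2]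
  have hv0 : v = 0 := by
    obtain ⟨i0⟩ := hG.nonempty
    have hval : ∀ i, v i = v i0 := fun i => hconst i i0
    have hmul : (n : ℝ) * v i0 = 0 := by
      calc (n:ℝ) * v i0 = ∑ _i : Fin n, v i0 := by
            rw [Finset.sum_const, Finset.card_univ, Fintype.card_fin, nsmul_eq_mul]
        _ = ∑ i, v i := Finset.sum_congr rfl fun i _ => (hval i).symm
        _ = 0 := hsum
    have hn : (n : ℝ) ≠ 0 := by
      have : 0 < n := Fin.pos_iff_nonempty.mpr hG.nonempty
      exact_mod_cast this.ne'
    have hi0 : v i0 = 0 := (mul_eq_zero.mp hmul).resolve_left hn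
    funext i
    rw [hval i, hi0]; rfl
  have hfix : (B * L) *ᵥ b = b := by
    have := hv0
    rw [hv, sub_eq_zero] at this
    exact this.symm
  have hcomm : L * B = B * L := by
    calc L * B = (L * B)ᵀ := h3.symm
      _ = Bᵀ * Lᵀ := Matrix.transpose_mul _ _
      _ = B * L := by rw [hBt, hsym]
  rw [Matrix.mulVec_mulVec, hcomm, hfix]

end Aux
open SimpleGraph

/-- Rayleigh monotonicity for edge removal: if `G` is connected, `e = (x,y)` an edge
of `G` such that `G∖{e}` is connected, then for every pair of vertices the effective
resistance in `G∖{e}` is at least the effective resistance in `G`. -/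
theorem stmt_5 {n : ℕ} (G : SimpleGraph (Fin n)) (hG : G.Connected) (x y : Fin n)
    (hxy : G.Adj x y) (hconn : (G.deleteEdges {s(x, y)}).Connected) :
    ∀ a b : Fin n, effRes G a b ≤ effRes (G.deleteEdges {s(x, y)}) a b := by
  intro a b
  set G' := G.deleteEdges {s(x, y)} with hG'def
  set c : Fin n → ℝ := incVec a b with hc_def
  have hc : ∑ i, c i = 0 := by
    simp [hc_def, incVec, Finset.sum_sub_distrib]
  set L := G.lapMatrix ℝ with hL
  set L' := G'.lapMatrix ℝ with hL'
  set u : Fin n → ℝ := pinv L *ᵥ c with hu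
  set u' : Fin n → ℝ := pinv L' *ᵥ c with hu'
  have h1 : L *ᵥ u = c := lap_pinv_solves G hG c hc
  have h2 : L' *ᵥ u' = c := by convert lap_pinv_solves G' hconn c hc
  have hPSD : (0:ℝ) ≤ (u - u') ⬝ᵥ (L' *ᵥ (u - u')) := by
    simpa using (posSemidef_lapMatrix ℝ G').dotProduct_mulVec_nonneg (u - u')
  have hswap : u' ⬝ᵥ (L' *ᵥ u) = c ⬝ᵥ u := by
    rw [Matrix.dotProduct_mulVec]
    have hsymL' : L'ᵀ = L' := G'.isSymm_lapMatrix (R := ℝ)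
    have : u' ᵥ* L' = L' *ᵥ u' := by
      conv_lhs => rw [← hsymL']
      rw [Matrix.vecMul_transpose]
    rw [this, h2]
  have hexp : (u - u') ⬝ᵥ (L' *ᵥ (u - u'))
      = u ⬝ᵥ (L' *ᵥ u) - 2 * (c ⬝ᵥ u) + c ⬝ᵥ u' := by
    rw [Matrix.mulVec_sub, dotProduct_sub, sub_dotProduct,
      sub_dotProduct, h2, hswap, dotProduct_comm u c,
      dotProduct_comm u' c]
    ring
  have hmono : u ⬝ᵥ (L' *ᵥ u) ≤ u ⬝ᵥ (L *ᵥ u) :=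
    by convert quad_le G G' (SimpleGraph.deleteEdges_le _) u
  have hLu : u ⬝ᵥ (L *ᵥ u) = c ⬝ᵥ u := by rw [h1, dotProduct_comm]
  have key : c ⬝ᵥ u ≤ c ⬝ᵥ u' := by linarith
  unfold effRes
  convert key
end

section
/- Sampling sum estimation: given n elements x₁,…,xₙ ∈ [0,a] and β > a·n^{−1/2}·(log n)^{1/2}, if each element is independently included in a sample with probability p = a·n^{−1/2}·(log n)^{1/2}/β ∈ (0,1) and x̄ = (Σ over sampled elements)/p, then with high probability |Σᵢ xᵢ − x̄| ≤ nβ. -/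
open Matrix Finset
open scoped Classical

lemma bern_mgf_le (q t : ℝ) (hq0 : 0 ≤ q) (hq1 : q ≤ 1) :
    q * Real.exp ((1 - q) * t) + (1 - q) * Real.exp (-q * t) ≤ Real.exp (t ^ 2 / 8) := by
  have hd : ∀ s : ℝ, 0 < 1 - q + q * Real.exp s := by
    intro s
    rcases eq_or_lt_of_le hq0 with h | h
    · simp [← h]
    · have := Real.exp_pos s
      nlinarith
  set F : ℝ → ℝ := fun s => s ^ 2 / 8 + q * s - Real.log (1 - q + q * Real.exp s) with hF
  set F' : ℝ → ℝ := fun s => s / 4 + q - q * Real.exp s / (1 - q + q * Real.exp s) with hF'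
  have hder : ∀ s, HasDerivAt F (F' s) s := by
    intro s
    have h1 : HasDerivAt (fun s : ℝ => 1 - q + q * Real.exp s) (q * Real.exp s) s := by
      simpa using ((Real.hasDerivAt_exp s).const_mul q).const_add (1 - q)
    have h2 : HasDerivAt (fun s => Real.log (1 - q + q * Real.exp s))
        (q * Real.exp s / (1 - q + q * Real.exp s)) s := h1.log (hd s).ne'
    have h3 : HasDerivAt (fun s : ℝ => s ^ 2 / 8 + q * s) (s / 4 + q) s := by
      have := ((hasDerivAt_pow 2 s).div_const 8).add ((hasDerivAt_id s).const_mul q)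
      refine this.congr_deriv ?_
      rw [show (2:ℕ) - 1 = 1 from rfl]; push_cast; ring
    exact h3.sub h2
  have hder' : ∀ s, HasDerivAt F'
      (1 / 4 - q * Real.exp s * (1 - q) / (1 - q + q * Real.exp s) ^ 2) s := by
    intro s
    have h1 : HasDerivAt (fun s : ℝ => 1 - q + q * Real.exp s) (q * Real.exp s) s := by
      simpa using ((Real.hasDerivAt_exp s).const_mul q).const_add (1 - q)
    have h0 : HasDerivAt (fun s : ℝ => q * Real.exp s) (q * Real.exp s) s :=
      (Real.hasDerivAt_exp s).const_mul q
    have h2 := h0.div h1 (hd s).ne'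
    have h3 : HasDerivAt (fun s : ℝ => s / 4 + q) (1 / 4) s := by
      simpa using ((hasDerivAt_id s).div_const 4).add_const q
    have h4 := h3.sub h2
    refine h4.congr_deriv ?_
    congr 2
    ring
  have hF'nonneg : ∀ s, 0 ≤ 1 / 4 - q * Real.exp s * (1 - q) / (1 - q + q * Real.exp s) ^ 2 := by
    intro s
    rw [sub_nonneg, div_le_iff₀ (pow_pos (hd s) 2)]
    have h1 : 0 ≤ q * Real.exp s := by positivity
    nlinarith [sq_nonneg (1 - q - q * Real.exp s)]
  have hF'mono : Monotone F' :=
    monotone_of_deriv_nonneg (fun s => (hder' s).differentiableAt) (by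
      intro s
      rw [(hder' s).deriv]
      exact hF'nonneg s)
  have hF'0 : F' 0 = 0 := by simp [hF']
  have hF0 : F 0 = 0 := by
    simp [hF]
  have hFnonneg : ∀ s, 0 ≤ F s := by
    intro s
    rcases le_total 0 s with h | h
    · have : MonotoneOn F (Set.Ici 0) := by
        apply monotoneOn_of_deriv_nonneg (convex_Ici 0)
          (Differentiable.continuous (fun y => (hder y).differentiableAt)).continuousOn
          (fun y _ => (hder y).differentiableAt.differentiableWithinAt)
        intro y hy
        rw [(hder y).deriv]
        rw [← hF'0]
        exact hF'mono (le_of_lt (by simpa using hy))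
      have := this (Set.self_mem_Ici) (Set.mem_Ici.2 h) h
      rwa [hF0] at this
    · have : AntitoneOn F (Set.Iic 0) := by
        apply antitoneOn_of_deriv_nonpos (convex_Iic 0)
          (Differentiable.continuous (fun y => (hder y).differentiableAt)).continuousOn
          (fun y _ => (hder y).differentiableAt.differentiableWithinAt)
        intro y hy
        rw [(hder y).deriv]
        rw [← hF'0]
        exact hF'mono (le_of_lt (by simpa using hy))
      have := this (Set.mem_Iic.2 h) (Set.self_mem_Iic) h
      rwa [hF0] at this
  have hFt := hFnonneg t
  have hlog : Real.log (1 - q + q * Real.exp t) ≤ t ^ 2 / 8 + q * t := by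
    have : F t = t ^ 2 / 8 + q * t - Real.log (1 - q + q * Real.exp t) := rfl
    linarith [hFt, this ▸ hFt]
  have hexp : 1 - q + q * Real.exp t ≤ Real.exp (t ^ 2 / 8 + q * t) := by
    calc 1 - q + q * Real.exp t = Real.exp (Real.log (1 - q + q * Real.exp t)) :=
          (Real.exp_log (hd t)).symm
      _ ≤ Real.exp (t ^ 2 / 8 + q * t) := Real.exp_le_exp.2 hlog
  have key : q * Real.exp ((1 - q) * t) + (1 - q) * Real.exp (-q * t)
      = Real.exp (-q * t) * (1 - q + q * Real.exp t) := by
    have e1 : Real.exp ((1 - q) * t) = Real.exp (-q * t) * Real.exp t := by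
      rw [← Real.exp_add]; ring_nf
    rw [e1]; ring
  rw [key]
  calc Real.exp (-q * t) * (1 - q + q * Real.exp t)
      ≤ Real.exp (-q * t) * Real.exp (t ^ 2 / 8 + q * t) := by
        exact mul_le_mul_of_nonneg_left hexp (Real.exp_pos _).le
    _ = Real.exp (t ^ 2 / 8) := by rw [← Real.exp_add]; ring_nf


lemma chernoff_fin {n : ℕ} (p t lam : ℝ) (hp0 : 0 ≤ p) (hp1 : p ≤ 1) (hlam : 0 ≤ lam)
    (g : Fin n → Bool → ℝ) :
    (∑ s : Fin n → Bool, (∏ i, if s i then p else 1 - p) *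
        (if t < ∑ i, g i (s i) then (1 : ℝ) else 0)) ≤
      Real.exp (-lam * t) *
        ∏ i, (p * Real.exp (lam * g i true) + (1 - p) * Real.exp (lam * g i false)) := by
  have hw : ∀ s : Fin n → Bool, (0:ℝ) ≤ ∏ i, if s i then p else 1 - p := by
    intro s
    apply Finset.prod_nonneg
    intro i _
    split <;> linarith
  have step1 : ∀ s : Fin n → Bool,
      (∏ i, if s i then p else 1 - p) * (if t < ∑ i, g i (s i) then (1 : ℝ) else 0) ≤
        Real.exp (-lam * t) *
          ∏ i, ((if s i then p else 1 - p) * Real.exp (lam * g i (s i))) := by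
    intro s
    have hprod : (∏ i, ((if s i then p else 1 - p) * Real.exp (lam * g i (s i))))
        = (∏ i, if s i then p else 1 - p) * Real.exp (lam * ∑ i, g i (s i)) := by
      rw [Finset.prod_mul_distrib, ← Real.exp_sum, Finset.mul_sum]
    rw [hprod]
    split
    · rename_i h
      rw [mul_one]
      have h1 : (1:ℝ) ≤ Real.exp (-lam * t) * Real.exp (lam * ∑ i, g i (s i)) := by
        rw [← Real.exp_add]
        apply Real.one_le_exp
        nlinarith
      nlinarith [hw s, h1]
    · rw [mul_zero]
      have := hw s
      positivity
  calc (∑ s : Fin n → Bool, (∏ i, if s i then p else 1 - p) *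
        (if t < ∑ i, g i (s i) then (1 : ℝ) else 0))
      ≤ ∑ s : Fin n → Bool, Real.exp (-lam * t) *
          ∏ i, ((if s i then p else 1 - p) * Real.exp (lam * g i (s i))) :=
        Finset.sum_le_sum fun s _ => step1 s
    _ = Real.exp (-lam * t) * ∑ s : Fin n → Bool,
          ∏ i, ((if s i then p else 1 - p) * Real.exp (lam * g i (s i))) := by
        rw [Finset.mul_sum]
    _ = Real.exp (-lam * t) *
        ∏ i, (p * Real.exp (lam * g i true) + (1 - p) * Real.exp (lam * g i false)) := by
        congr 1
        have := Finset.prod_univ_sum (t := fun _ : Fin n => (Finset.univ : Finset Bool))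
          (f := fun i b => (if b then p else 1 - p) * Real.exp (lam * g i b))
        rw [Fintype.piFinset_univ] at this
        rw [← this]
        apply Finset.prod_congr rfl
        intro i _
        rw [Fintype.sum_bool]
        simp

lemma tail_bound {n : ℕ} (p β a : ℝ) (hp0 : 0 < p) (hp1 : p < 1) (ha : 0 < a)
    (hβ : 0 ≤ β) (g : Fin n → Bool → ℝ)
    (hfac : ∀ i, p * Real.exp ((4 * β * p ^ 2 / a ^ 2) * g i true) +
        (1 - p) * Real.exp ((4 * β * p ^ 2 / a ^ 2) * g i false) ≤
        Real.exp ((4 * β * p ^ 2 / a ^ 2) ^ 2 * a ^ 2 / (8 * p ^ 2))) :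
    (∑ s : Fin n → Bool, (∏ i, if s i then p else 1 - p) *
        (if (n : ℝ) * β < ∑ i, g i (s i) then (1 : ℝ) else 0)) ≤
      Real.exp (-2 * n * β ^ 2 * p ^ 2 / a ^ 2) := by
  set lam : ℝ := 4 * β * p ^ 2 / a ^ 2 with hlam
  have hlam0 : 0 ≤ lam := by positivity
  calc (∑ s : Fin n → Bool, (∏ i, if s i then p else 1 - p) *
        (if (n : ℝ) * β < ∑ i, g i (s i) then (1 : ℝ) else 0))
      ≤ Real.exp (-lam * ((n : ℝ) * β)) *
          ∏ i, (p * Real.exp (lam * g i true) + (1 - p) * Real.exp (lam * g i false)) :=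
        chernoff_fin p ((n : ℝ) * β) lam hp0.le hp1.le hlam0 g
    _ ≤ Real.exp (-lam * ((n : ℝ) * β)) *
          ∏ _i : Fin n, Real.exp (lam ^ 2 * a ^ 2 / (8 * p ^ 2)) := by
        apply mul_le_mul_of_nonneg_left _ (Real.exp_pos _).le
        apply Finset.prod_le_prod
        · intro i _
          have h1 := (Real.exp_pos (lam * g i true)).le
          have h2 := (Real.exp_pos (lam * g i false)).le
          have : (0:ℝ) ≤ 1 - p := by linarith
          positivity
        · intro i _
          exact hfac i
    _ = Real.exp (-lam * ((n : ℝ) * β) + n * (lam ^ 2 * a ^ 2 / (8 * p ^ 2))) := by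
        rw [Finset.prod_const, Finset.card_univ, Fintype.card_fin, ← Real.exp_nat_mul,
          ← Real.exp_add]
    _ = Real.exp (-2 * n * β ^ 2 * p ^ 2 / a ^ 2) := by
        congr 1
        rw [hlam]
        field_simp
        ring

/-- Sampling sum estimation: for `x₁,…,xₙ ∈ [0,a]` and
`β > a·n^{-1/2}·(log n)^{1/2}`, sampling each element independently with probability
`p = a·n^{-1/2}·(log n)^{1/2}/β ∈ (0,1)` and forming the Horvitz–Thompson estimator
`x̄ = (Σ over sampled)/p`, the probability that `|Σᵢ xᵢ - x̄| > nβ` is at most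
`2·exp(-2nβ²p²/a²)`. The probability is written explicitly as a sum over all
Bernoulli sample outcomes `s : Fin n → Bool`. -/
theorem stmt_14 {n : ℕ} (hn : 0 < n) (x : Fin n → ℝ) (a β p : ℝ) (ha : 0 < a)
    (hx : ∀ i, x i ∈ Set.Icc (0 : ℝ) a)
    (hβ : β > a * Real.sqrt (Real.log n) / Real.sqrt n)
    (hp : p = a * Real.sqrt (Real.log n) / (Real.sqrt n * β))
    (hp0 : 0 < p) (hp1 : p < 1) :
    (∑ s : Fin n → Bool,
        (∏ i, if s i then p else 1 - p) *
          (if n * β < |(∑ i, x i) - (∑ i, if s i then x i else 0) / p| then 1 else 0)) ≤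
      2 * Real.exp (-2 * n * β ^ 2 * p ^ 2 / a ^ 2) := by
  have hβ0 : 0 ≤ β := le_trans (by positivity) hβ.le
  set lam : ℝ := 4 * β * p ^ 2 / a ^ 2 with hlam
  -- the two components
  set g1 : Fin n → Bool → ℝ := fun i b => x i - (if b then x i else 0) / p with hg1
  set g2 : Fin n → Bool → ℝ := fun i b => (if b then x i else 0) / p - x i with hg2
  have hA : ∀ s : Fin n → Bool,
      (∑ i, x i) - (∑ i, if s i then x i else 0) / p = ∑ i, g1 i (s i) := by
    intro s
    rw [hg1, Finset.sum_sub_distrib, ← Finset.sum_div]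
  have hA2 : ∀ s : Fin n → Bool,
      -((∑ i, x i) - (∑ i, if s i then x i else 0) / p) = ∑ i, g2 i (s i) := by
    intro s
    rw [hg2, Finset.sum_sub_distrib, ← Finset.sum_div]
    ring
  have hw : ∀ s : Fin n → Bool, (0:ℝ) ≤ ∏ i, if s i then p else 1 - p := by
    intro s
    apply Finset.prod_nonneg
    intro i _
    split <;> linarith
  -- per-factor bounds
  have hu2 : ∀ i : Fin n, (lam * x i / p) ^ 2 / 8 ≤ lam ^ 2 * a ^ 2 / (8 * p ^ 2) := by
    intro i
    obtain ⟨hx0, hxa⟩ := hx i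
    rw [div_pow, div_div, div_le_div_iff₀ (by positivity) (by positivity)]
    have hx2 : x i ^ 2 ≤ a ^ 2 := by nlinarith
    have : (lam * x i) ^ 2 ≤ lam ^ 2 * a ^ 2 := by
      rw [mul_pow]
      exact mul_le_mul_of_nonneg_left hx2 (sq_nonneg lam)
    nlinarith [sq_nonneg p, this]
  have hfac1 : ∀ i, p * Real.exp (lam * g1 i true) + (1 - p) * Real.exp (lam * g1 i false) ≤
      Real.exp (lam ^ 2 * a ^ 2 / (8 * p ^ 2)) := by
    intro i
    have e1 : g1 i true = x i - x i / p := by simp [hg1]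
    have e2 : g1 i false = x i := by simp [hg1]
    have h1 : lam * g1 i true = -(1 - p) * (lam * x i / p) := by
      rw [e1]; field_simp; try ring
    have h2 : lam * g1 i false = (1 - (1 - p)) * (lam * x i / p) := by
      rw [e2]; field_simp; try ring
    have hb := bern_mgf_le (1 - p) (lam * x i / p) (by linarith) (by linarith)
    calc p * Real.exp (lam * g1 i true) + (1 - p) * Real.exp (lam * g1 i false)
        = (1 - p) * Real.exp ((1 - (1 - p)) * (lam * x i / p)) +
            (1 - (1 - p)) * Real.exp (-(1 - p) * (lam * x i / p)) := by
          rw [h1, h2]; ring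
      _ ≤ Real.exp ((lam * x i / p) ^ 2 / 8) := hb
      _ ≤ Real.exp (lam ^ 2 * a ^ 2 / (8 * p ^ 2)) := Real.exp_le_exp.2 (hu2 i)
  have hfac2 : ∀ i, p * Real.exp (lam * g2 i true) + (1 - p) * Real.exp (lam * g2 i false) ≤
      Real.exp (lam ^ 2 * a ^ 2 / (8 * p ^ 2)) := by
    intro i
    have e1 : g2 i true = x i / p - x i := by simp [hg2]
    have e2 : g2 i false = -x i := by simp [hg2]
    have h1 : lam * g2 i true = (1 - p) * (lam * x i / p) := by
      rw [e1]; field_simp; try ring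
    have h2 : lam * g2 i false = -p * (lam * x i / p) := by
      rw [e2]; field_simp; try ring
    have hb := bern_mgf_le p (lam * x i / p) hp0.le hp1.le
    calc p * Real.exp (lam * g2 i true) + (1 - p) * Real.exp (lam * g2 i false)
        = p * Real.exp ((1 - p) * (lam * x i / p)) +
            (1 - p) * Real.exp (-p * (lam * x i / p)) := by rw [h1, h2]
      _ ≤ Real.exp ((lam * x i / p) ^ 2 / 8) := hb
      _ ≤ Real.exp (lam ^ 2 * a ^ 2 / (8 * p ^ 2)) := Real.exp_le_exp.2 (hu2 i)
  -- split the absolute value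
  have hsplit : ∀ s : Fin n → Bool,
      (∏ i, if s i then p else 1 - p) *
        (if (n : ℝ) * β < |(∑ i, x i) - (∑ i, if s i then x i else 0) / p| then (1:ℝ) else 0) ≤
      (∏ i, if s i then p else 1 - p) *
          (if (n : ℝ) * β < ∑ i, g1 i (s i) then (1:ℝ) else 0) +
        (∏ i, if s i then p else 1 - p) *
          (if (n : ℝ) * β < ∑ i, g2 i (s i) then (1:ℝ) else 0) := by
    intro s
    rw [← mul_add]
    apply mul_le_mul_of_nonneg_left _ (hw s)
    set A : ℝ := (∑ i, x i) - (∑ i, if s i then x i else 0) / p with hAdef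
    rw [← hA s, ← hA2 s]
    by_cases h : (n : ℝ) * β < |A|
    · rw [if_pos h]
      rcases lt_abs.1 h with h' | h'
      · rw [if_pos h']
        have : (0:ℝ) ≤ if (n : ℝ) * β < -A then (1:ℝ) else 0 := by positivity
        linarith
      · rw [if_pos (by linarith : (n : ℝ) * β < -A)]
        have : (0:ℝ) ≤ if (n : ℝ) * β < A then (1:ℝ) else 0 := by positivity
        linarith
    · rw [if_neg h]
      have h1 : (0:ℝ) ≤ if (n : ℝ) * β < A then (1:ℝ) else 0 := by positivity
      have h2 : (0:ℝ) ≤ if (n : ℝ) * β < -A then (1:ℝ) else 0 := by positivity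
      linarith
  calc (∑ s : Fin n → Bool,
        (∏ i, if s i then p else 1 - p) *
          (if (n : ℝ) * β < |(∑ i, x i) - (∑ i, if s i then x i else 0) / p| then (1:ℝ) else 0))
      ≤ ∑ s : Fin n → Bool,
          ((∏ i, if s i then p else 1 - p) *
              (if (n : ℝ) * β < ∑ i, g1 i (s i) then (1:ℝ) else 0) +
            (∏ i, if s i then p else 1 - p) *
              (if (n : ℝ) * β < ∑ i, g2 i (s i) then (1:ℝ) else 0)) :=
        Finset.sum_le_sum fun s _ => hsplit s
    _ = (∑ s : Fin n → Bool, (∏ i, if s i then p else 1 - p) *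
          (if (n : ℝ) * β < ∑ i, g1 i (s i) then (1:ℝ) else 0)) +
        (∑ s : Fin n → Bool, (∏ i, if s i then p else 1 - p) *
          (if (n : ℝ) * β < ∑ i, g2 i (s i) then (1:ℝ) else 0)) := Finset.sum_add_distrib
    _ ≤ Real.exp (-2 * n * β ^ 2 * p ^ 2 / a ^ 2) + Real.exp (-2 * n * β ^ 2 * p ^ 2 / a ^ 2) :=
        add_le_add (tail_bound p β a hp0 hp1 ha hβ0 g1 hfac1)
          (tail_bound p β a hp0 hp1 ha hβ0 g2 hfac2)
    _ = 2 * Real.exp (-2 * n * β ^ 2 * p ^ 2 / a ^ 2) := by ring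
end
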